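/- Suppose θ : Fin n₁ → ℝ satisfies, for every i < n₁, θ i = |C_i| − Σ_{j ∈ C_i, j < n₁} (1 + θ j)⁻¹ (such θ exists and is unique because every child has a strictly larger index than its parent). Then θ i > 0 for all i, and the Generation Matrix G' of the 1-order subtree T⁽¹⁾ with node weights w' i = √(1 + θ i) and edge weights u' i = 1/√(1 + θ i) for i ≠ 0 satisfies G'ᵀ · G' = M_Tᵀ · M_T. -/

import Mathlib

open Matrix Finset

/-- The explicit weights of the inner-product-equivalent Generation Matrix: if `θ` satisfies
the recurrence `θ i = |C_i| - ∑_{j ∈ C_i, j < n₁} (1 + θ j)⁻¹`, then `θ i > 0` for all `i`,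
and the Generation Matrix of the `1`-order subtree with node weights `√(1 + θ i)` and edge
weights `1/√(1 + θ i)` satisfies `G'ᵀ ⬝ G' = M_Tᵀ ⬝ M_T`. -/
theorem consistencyMatrix_theta_weights (n n₁ : ℕ) [NeZero n]
    (f : Fin n → Fin n) (hf0 : f 0 = 0) (hf : ∀ i : Fin n, i ≠ 0 → f i < i)
    (hn₁ : 1 ≤ n₁) (hn₁n : n₁ < n)
    (hleaf : ∀ i : Fin n, (∃ j : Fin n, j ≠ 0 ∧ f j = i) ↔ (i : ℕ) < n₁)
    (M : Matrix (Fin n) (Fin n₁) ℝ)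
    (hM : ∀ (i : Fin n) (j : Fin n₁), M i j =
      if (i : ℕ) = (j : ℕ) then 1
      else if i ≠ 0 ∧ (j : ℕ) = (f i : ℕ) then -1 else 0)
    (θ : Fin n₁ → ℝ)
    (hθ : ∀ i : Fin n₁, θ i =
      ((Finset.univ.filter fun j : Fin n =>
        j ≠ 0 ∧ f j = Fin.castLE hn₁n.le i).card : ℝ) -
      ∑ j : Fin n₁,
        (if Fin.castLE hn₁n.le j ≠ 0 ∧
            f (Fin.castLE hn₁n.le j) = Fin.castLE hn₁n.le i
         then (1 + θ j)⁻¹ else 0)) :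
    (∀ i : Fin n₁, 0 < θ i) ∧
    (Matrix.of (fun a b : Fin n₁ =>
      if a = b then Real.sqrt (1 + θ a)
      else if (a : ℕ) ≠ 0 ∧ (b : ℕ) = (f (Fin.castLE hn₁n.le a) : ℕ)
        then -(1 / Real.sqrt (1 + θ a))
      else 0))ᵀ *
    Matrix.of (fun a b : Fin n₁ =>
      if a = b then Real.sqrt (1 + θ a)
      else if (a : ℕ) ≠ 0 ∧ (b : ℕ) = (f (Fin.castLE hn₁n.le a) : ℕ)
        then -(1 / Real.sqrt (1 + θ a))
      else 0) = Mᵀ * M := by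
  have hne : (n : ℕ) ≠ 0 := NeZero.ne n
  set c : Fin n₁ → Fin n := Fin.castLE hn₁n.le with hc
  have hcv : ∀ a : Fin n₁, (c a : ℕ) = (a : ℕ) := fun a => rfl
  have hc0 : ∀ a : Fin n₁, (c a ≠ 0 ↔ (a : ℕ) ≠ 0) := by
    intro a
    constructor
    · intro h h0
      exact h (Fin.ext (by simp [hcv, h0]))
    · intro h h0
      exact h (by simpa [hcv] using congrArg Fin.val h0)
  -- positivity
  have pos : ∀ i : Fin n₁, 0 < θ i := by
    suffices h : ∀ m, ∀ i : Fin n₁, n₁ - (i : ℕ) ≤ m → 0 < θ i by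
      intro i; exact h n₁ i (Nat.sub_le _ _)
    intro m
    induction m with
    | zero => intro i hi; have := i.isLt; omega
    | succ m ih =>
      intro i hi
      rw [hθ i]
      set S : Finset (Fin n₁) := Finset.univ.filter
        (fun j : Fin n₁ => c j ≠ 0 ∧ f (c j) = c i) with hS
      have hsum : (∑ j : Fin n₁, if c j ≠ 0 ∧ f (c j) = c i then (1 + θ j)⁻¹ else 0)
          = ∑ j ∈ S, (1 + θ j)⁻¹ := (Finset.sum_filter _ _).symm
      have hposS : ∀ j ∈ S, 0 < θ j := by
        intro j hj
        rw [hS, Finset.mem_filter] at hj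
        have hlt := hf (c j) hj.2.1
        rw [hj.2.2] at hlt
        have hij : (i : ℕ) < (j : ℕ) := hlt
        exact ih j (by omega)
      have hcard : S.card ≤ (Finset.univ.filter fun j : Fin n => j ≠ 0 ∧ f j = c i).card := by
        apply Finset.card_le_card_of_injOn c
        · intro j hj
          rw [hS, Finset.mem_coe, Finset.mem_filter] at hj
          exact Finset.mem_coe.mpr (Finset.mem_filter.mpr ⟨Finset.mem_univ _, hj.2⟩)
        · intro a _ b _ hab
          exact Fin.ext (by simpa [hcv] using congrArg Fin.val hab)
      have hone : 1 ≤ (Finset.univ.filter fun j : Fin n => j ≠ 0 ∧ f j = c i).card := by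
        obtain ⟨j, hj⟩ := (hleaf (c i)).mpr (by simpa [hcv] using i.isLt)
        exact Finset.card_pos.mpr ⟨j, Finset.mem_filter.mpr ⟨Finset.mem_univ _, hj⟩⟩
      rw [hsum]
      have hlt : (∑ j ∈ S, (1 + θ j)⁻¹) <
          ((Finset.univ.filter fun j : Fin n => j ≠ 0 ∧ f j = c i).card : ℝ) := by
        rcases S.eq_empty_or_nonempty with h | h
        · rw [h, Finset.sum_empty]
          exact_mod_cast hone
        · calc (∑ j ∈ S, (1 + θ j)⁻¹) < ∑ j ∈ S, 1 := by
                apply Finset.sum_lt_sum_of_nonempty h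
                intro j hj
                have hp := hposS j hj
                rw [inv_lt_one_iff₀]
                right; linarith
             _ = (S.card : ℝ) := by simp
             _ ≤ _ := by exact_mod_cast hcard
      linarith
  have hθ1 : ∀ a : Fin n₁, (0:ℝ) < 1 + θ a := fun a => by have := pos a; linarith
  have hw : ∀ a : Fin n₁, Real.sqrt (1 + θ a) * Real.sqrt (1 + θ a) = 1 + θ a :=
    fun a => Real.mul_self_sqrt (hθ1 a).le
  have hw0 : ∀ a : Fin n₁, Real.sqrt (1 + θ a) ≠ 0 := by
    intro a
    have : 0 < Real.sqrt (1 + θ a) := Real.sqrt_pos.mpr (hθ1 a)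
    linarith
  have hvne : ∀ {a b : Fin n₁}, a ≠ b → (a : ℕ) ≠ (b : ℕ) :=
    fun h hv => h (Fin.ext hv)
  refine ⟨pos, ?_⟩
  ext j k
  rw [Matrix.mul_apply, Matrix.mul_apply]
  simp only [Matrix.transpose_apply, Matrix.of_apply, hM]
  rcases eq_or_ne j k with rfl | hjk
  · -- diagonal
    have hterm1 : ∀ a : Fin n₁,
        (if a = j then Real.sqrt (1 + θ a)
          else if (a : ℕ) ≠ 0 ∧ (j : ℕ) = (f (c a) : ℕ) then -(1 / Real.sqrt (1 + θ a)) else 0) *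
        (if a = j then Real.sqrt (1 + θ a)
          else if (a : ℕ) ≠ 0 ∧ (j : ℕ) = (f (c a) : ℕ) then -(1 / Real.sqrt (1 + θ a)) else 0)
        = (if a = j then 1 + θ j else 0) +
          (if (a : ℕ) ≠ 0 ∧ (j : ℕ) = (f (c a) : ℕ) then (1 + θ a)⁻¹ else 0) := by
      intro a
      by_cases h : a = j
      · subst h
        have hcond : ¬((a : ℕ) ≠ 0 ∧ (a : ℕ) = (f (c a) : ℕ)) := by
          rintro ⟨h0, heq⟩
          have hlt : f (c a) < c a := hf (c a) ((hc0 a).mpr h0)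
          have : (f (c a) : ℕ) < (a : ℕ) := hlt
          omega
        rw [if_pos rfl, if_neg hcond, hw, add_zero, if_pos rfl]
      · rw [if_neg h, if_neg h, zero_add]
        by_cases h2 : (a : ℕ) ≠ 0 ∧ (j : ℕ) = (f (c a) : ℕ)
        · rw [if_pos h2, neg_mul_neg, one_div, ← mul_inv, hw, if_pos h2]
        · rw [if_neg h2, mul_zero, if_neg h2]
    have hterm2 : ∀ i : Fin n,
        (if (i : ℕ) = (j : ℕ) then (1:ℝ)
          else if i ≠ 0 ∧ (j : ℕ) = (f i : ℕ) then -1 else 0) *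
        (if (i : ℕ) = (j : ℕ) then (1:ℝ)
          else if i ≠ 0 ∧ (j : ℕ) = (f i : ℕ) then -1 else 0)
        = (if (i : ℕ) = (j : ℕ) then 1 else 0) +
          (if i ≠ 0 ∧ (j : ℕ) = (f i : ℕ) then 1 else 0) := by
      intro i
      by_cases h : (i : ℕ) = (j : ℕ)
      · have hcond : ¬(i ≠ 0 ∧ (j : ℕ) = (f i : ℕ)) := by
          rintro ⟨h0, heq⟩
          have : (f i : ℕ) < (i : ℕ) := hf i h0
          omega
        rw [if_pos h, if_pos h, if_neg hcond, mul_one, add_zero]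
      · rw [if_neg h, if_neg h, zero_add]
        by_cases h2 : i ≠ 0 ∧ (j : ℕ) = (f i : ℕ)
        · rw [if_pos h2, neg_mul_neg, mul_one, if_pos h2]
        · rw [if_neg h2, mul_zero, if_neg h2]
    rw [Finset.sum_congr rfl fun a _ => hterm1 a, Finset.sum_congr rfl fun i _ => hterm2 i,
      Finset.sum_add_distrib, Finset.sum_add_distrib, Finset.sum_ite_eq' Finset.univ j]
    have hsum1 : (∑ i : Fin n, if (i : ℕ) = (j : ℕ) then (1:ℝ) else 0) = 1 := by
      rw [Finset.sum_congr rfl (g := fun i => if i = c j then (1:ℝ) else 0)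
        (fun i _ => by
          congr 1
          simp only [eq_iff_iff]
          constructor
          · intro h; exact Fin.ext (by simpa [hcv] using h)
          · intro h; subst h; simp [hcv]),
        Finset.sum_ite_eq' Finset.univ (c j)]
      simp
    rw [hsum1]
    have hsum2 : (∑ i : Fin n, if i ≠ 0 ∧ (j : ℕ) = (f i : ℕ) then (1:ℝ) else 0)
        = ((Finset.univ.filter fun i : Fin n => i ≠ 0 ∧ f i = c j).card : ℝ) := by
      rw [Finset.sum_boole]
      norm_cast
      apply congrArg
      apply Finset.filter_congr
      intro i _
      constructor
      · rintro ⟨h0, he⟩; exact ⟨h0, Fin.ext (by simp [hcv, ← he])⟩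
      · rintro ⟨h0, he⟩; exact ⟨h0, by simp [he, hcv]⟩
    rw [hsum2]
    have hsum3 : (∑ a : Fin n₁, if (a : ℕ) ≠ 0 ∧ (j : ℕ) = (f (c a) : ℕ)
          then (1 + θ a)⁻¹ else 0)
        = ∑ a : Fin n₁, if c a ≠ 0 ∧ f (c a) = c j then (1 + θ a)⁻¹ else 0 := by
      apply Finset.sum_congr rfl
      intro a _
      congr 1
      simp only [eq_iff_iff]
      constructor
      · rintro ⟨h0, he⟩; exact ⟨(hc0 a).mpr h0, Fin.ext (by simp [hcv, ← he])⟩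
      · rintro ⟨h0, he⟩; exact ⟨(hc0 a).mp h0, by simp [he, hcv]⟩
    rw [hsum3]
    rw [if_pos (Finset.mem_univ j)]
    have := hθ j
    linarith
  · -- off-diagonal
    have hjkv : (j : ℕ) ≠ (k : ℕ) := hvne hjk
    have hterm3 : ∀ a : Fin n₁,
        (if a = j then Real.sqrt (1 + θ a)
          else if (a : ℕ) ≠ 0 ∧ (j : ℕ) = (f (c a) : ℕ) then -(1 / Real.sqrt (1 + θ a)) else 0) *
        (if a = k then Real.sqrt (1 + θ a)
          else if (a : ℕ) ≠ 0 ∧ (k : ℕ) = (f (c a) : ℕ) then -(1 / Real.sqrt (1 + θ a)) else 0)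
        = (if a = j then (if (j : ℕ) ≠ 0 ∧ (k : ℕ) = (f (c j) : ℕ) then (-1:ℝ) else 0) else 0) +
          (if a = k then (if (k : ℕ) ≠ 0 ∧ (j : ℕ) = (f (c k) : ℕ) then (-1:ℝ) else 0) else 0) := by
      intro a
      by_cases h1 : a = j
      · subst h1
        rw [if_pos rfl, if_pos rfl, if_neg hjk, if_neg hjk, add_zero]
        by_cases h2 : (a : ℕ) ≠ 0 ∧ (k : ℕ) = (f (c a) : ℕ)
        · rw [if_pos h2, if_pos h2, mul_neg, mul_one_div, div_self (hw0 a)]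
        · rw [if_neg h2, if_neg h2, mul_zero]
      · by_cases h3 : a = k
        · subst h3
          rw [if_neg h1, if_neg h1, if_pos rfl, if_pos rfl, zero_add]
          by_cases h2 : (a : ℕ) ≠ 0 ∧ (j : ℕ) = (f (c a) : ℕ)
          · rw [if_pos h2, if_pos h2, neg_mul, one_div, inv_mul_cancel₀ (hw0 a)]
          · rw [if_neg h2, if_neg h2, zero_mul]
        · rw [if_neg h1, if_neg h1, if_neg h3, if_neg h3, add_zero]
          by_cases h4 : (a : ℕ) ≠ 0 ∧ (j : ℕ) = (f (c a) : ℕ)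
          · by_cases h5 : (a : ℕ) ≠ 0 ∧ (k : ℕ) = (f (c a) : ℕ)
            · exact absurd (h4.2.trans h5.2.symm) hjkv
            · rw [if_neg h5, mul_zero]
          · rw [if_neg h4, zero_mul]
    have hterm4 : ∀ i : Fin n,
        (if (i : ℕ) = (j : ℕ) then (1:ℝ)
          else if i ≠ 0 ∧ (j : ℕ) = (f i : ℕ) then -1 else 0) *
        (if (i : ℕ) = (k : ℕ) then (1:ℝ)
          else if i ≠ 0 ∧ (k : ℕ) = (f i : ℕ) then -1 else 0)
        = (if i = c j then (if (j : ℕ) ≠ 0 ∧ (k : ℕ) = (f (c j) : ℕ) then (-1:ℝ) else 0) else 0) +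
          (if i = c k then (if (k : ℕ) ≠ 0 ∧ (j : ℕ) = (f (c k) : ℕ) then (-1:ℝ) else 0) else 0) := by
      intro i
      by_cases h1 : (i : ℕ) = (j : ℕ)
      · have hij : i = c j := Fin.ext (by simpa [hcv] using h1)
        subst hij
        have hnk : ¬((c j : ℕ) = (k : ℕ)) := by rw [hcv]; exact hjkv
        have hnck : ¬(c j = c k) := fun h => hjk (Fin.ext (by simpa [hcv] using congrArg Fin.val h))
        rw [if_pos h1, if_pos rfl, if_neg hnck, if_neg hnk, add_zero, one_mul]
        congr 1
        simp only [eq_iff_iff]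
        constructor
        · rintro ⟨h0, he⟩; exact ⟨(hc0 j).mp h0, he⟩
        · rintro ⟨h0, he⟩; exact ⟨(hc0 j).mpr h0, he⟩
      · by_cases h3 : (i : ℕ) = (k : ℕ)
        · have hik : i = c k := Fin.ext (by simpa [hcv] using h3)
          subst hik
          have hncj : ¬(c k = c j) := fun h => hjk (Fin.ext (by simpa [hcv] using (congrArg Fin.val h).symm))
          rw [if_neg h1, if_pos h3, if_neg hncj, if_pos rfl, zero_add, mul_one]
          congr 1
          simp only [eq_iff_iff]
          constructor
          · rintro ⟨h0, he⟩; exact ⟨(hc0 k).mp h0, he⟩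
          · rintro ⟨h0, he⟩; exact ⟨(hc0 k).mpr h0, he⟩
        · have hncj : i ≠ c j := fun h => h1 (by simp [h, hcv])
          have hnck : i ≠ c k := fun h => h3 (by simp [h, hcv])
          rw [if_neg h1, if_neg h3, if_neg hncj, if_neg hnck, add_zero]
          by_cases h4 : i ≠ 0 ∧ (j : ℕ) = (f i : ℕ)
          · by_cases h5 : i ≠ 0 ∧ (k : ℕ) = (f i : ℕ)
            · exact absurd (h4.2.trans h5.2.symm) hjkv
            · rw [if_neg h5, mul_zero]
          · rw [if_neg h4, zero_mul]
    rw [Finset.sum_congr rfl fun a _ => hterm3 a, Finset.sum_congr rfl fun i _ => hterm4 i,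
      Finset.sum_add_distrib, Finset.sum_add_distrib,
      Finset.sum_ite_eq' Finset.univ j, Finset.sum_ite_eq' Finset.univ k,
      Finset.sum_ite_eq' Finset.univ (c j), Finset.sum_ite_eq' Finset.univ (c k)]
    simp
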